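/- The function g(u) = 2π − arccos(−1/u) + u·sin(2π − arccos(−1/u)) has exactly one zero u in the interval (1, ∞); that is, there exists a unique real number u > 1 with g(u) = 0 (this zero is u* ≈ 4.603). -/

import Mathlib

open Real Set

noncomputable def hfun : ℝ → ℝ := fun u => Real.arccos (-1/u) + Real.sqrt (u^2 - 1)

lemma hfun_hasDerivAt {u : ℝ} (hu : 1 < u) :
    HasDerivAt hfun ((u^2 - 1) / (u * Real.sqrt (u^2 - 1))) u := by
  have hu0 : u ≠ 0 := by linarith
  have hupos : (0:ℝ) < u := by linarith
  have hs : (0:ℝ) < Real.sqrt (u^2 - 1) := Real.sqrt_pos.mpr (by nlinarith)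
  have h1 : -1/u ≠ -1 := by
    intro h
    have : u = 1 := by field_simp at h; linarith
    linarith
  have h2 : -1/u ≠ 1 := by
    intro h
    have : (-1:ℝ) = u := by field_simp at h; linarith
    linarith
  have hinner : HasDerivAt (fun y : ℝ => -1/y) (1/u^2) u := by
    have := (hasDerivAt_inv hu0).neg
    have h3 := this.congr_of_eventuallyEq (f₁ := fun y : ℝ => -1/y)
      (Filter.Eventually.of_forall fun y => by simp [neg_div, Pi.neg_apply])
    simpa using h3
  have harc : HasDerivAt (fun y : ℝ => Real.arccos (-1/y))
      (-(1 / Real.sqrt (1 - (-1/u)^2)) * (1/u^2)) u :=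
    (Real.hasDerivAt_arccos h1 h2).comp u hinner
  have hsq : HasDerivAt (fun y : ℝ => y^2 - 1) (2*u) u := by
    simpa using (hasDerivAt_pow 2 u).sub_const 1
  have hsqrt : HasDerivAt (fun y : ℝ => Real.sqrt (y^2 - 1))
      (1 / (2 * Real.sqrt (u^2 - 1)) * (2*u)) u :=
    (Real.hasDerivAt_sqrt (by nlinarith)).comp u hsq
  have hsum := harc.add hsqrt
  have key : Real.sqrt (1 - (-1/u)^2) = Real.sqrt (u^2 - 1) / u := by
    have e : 1 - (-1/u)^2 = (u^2 - 1) / u^2 := by field_simp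
    rw [e, Real.sqrt_div' _ (by positivity), Real.sqrt_sq hupos.le]
  have : -(1 / Real.sqrt (1 - (-1/u)^2)) * (1/u^2) + 1 / (2 * Real.sqrt (u^2 - 1)) * (2*u)
      = (u^2 - 1) / (u * Real.sqrt (u^2 - 1)) := by
    rw [key]
    field_simp
    ring
  rw [this] at hsum
  exact hsum

lemma hfun_strictMonoOn : StrictMonoOn hfun (Ioi 1) := by
  apply strictMonoOn_of_deriv_pos (convex_Ioi 1)
  · intro x hx
    exact ((hfun_hasDerivAt hx).continuousAt).continuousWithinAt
  · intro x hx
    rw [interior_Ioi] at hx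
    rw [(hfun_hasDerivAt hx).deriv]
    have hs : (0:ℝ) < Real.sqrt (x^2 - 1) := Real.sqrt_pos.mpr (by nlinarith [hx.out])
    have : (1:ℝ) < x := hx
    exact div_pos (by nlinarith) (by positivity)

lemma g_eq {u : ℝ} (hu : 1 < u) :
    2 * π - Real.arccos (-1 / u) + u * Real.sin (2 * π - Real.arccos (-1 / u))
      = 2 * π - hfun u := by
  have hupos : (0:ℝ) < u := by linarith
  have hsin : Real.sin (2 * π - Real.arccos (-1/u)) = - Real.sqrt (1 - (-1/u)^2) := by
    simp [Real.sin_sub, Real.sin_arccos]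
  have key : u * Real.sqrt (1 - (-1/u)^2) = Real.sqrt (u^2 - 1) := by
    have e : 1 - (-1/u)^2 = (u^2 - 1) / u^2 := by field_simp
    rw [e, Real.sqrt_div' _ (by positivity), Real.sqrt_sq hupos.le]
    field_simp
  rw [hsin]
  unfold hfun
  rw [mul_neg, key]
  ring

theorem exists_unique_zero_of_g_on_Ioi_one :
    ∃! u : ℝ, u > 1 ∧
      2 * π - Real.arccos (-1 / u)
        + u * Real.sin (2 * π - Real.arccos (-1 / u)) = 0 := by
  have hpi : (3:ℝ) < π := Real.pi_gt_three
  have hpi2 : π < 3.15 := Real.pi_lt_d2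
  have hpi2' : π < 3.2 := by nlinarith [Real.pi_lt_d2]
  -- continuity on [2,7]
  have hcont : ContinuousOn hfun (Icc 2 7) := by
    intro x hx
    have : (1:ℝ) < x := by linarith [hx.1]
    exact ((hfun_hasDerivAt this).continuousAt).continuousWithinAt
  have h2lt : hfun 2 < 2 * π := by
    unfold hfun
    have ha : Real.arccos (-1/2) ≤ π := Real.arccos_le_pi _
    have hb : Real.sqrt (2^2 - 1) < 2 := by
      rw [show (2:ℝ)^2 - 1 = 3 by norm_num]
      nlinarith [Real.sq_sqrt (by norm_num : (3:ℝ) ≥ 0), Real.sqrt_nonneg 3]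
    set A := Real.arccos (-1/(2:ℝ)); set B := Real.sqrt ((2:ℝ)^2 - 1); linarith
  have h7gt : 2 * π < hfun 7 := by
    unfold hfun
    have ha : 0 ≤ Real.arccos (-1/7) := Real.arccos_nonneg _
    have hb : (6.5:ℝ) < Real.sqrt (7^2 - 1) := by
      rw [show (7:ℝ)^2 - 1 = 48 by norm_num]
      nlinarith [Real.sq_sqrt (by norm_num : (48:ℝ) ≥ 0), Real.sqrt_nonneg 48]
    set A := Real.arccos (-1/(7:ℝ)); set B := Real.sqrt ((7:ℝ)^2 - 1); linarith
  have hiv := intermediate_value_Icc (by norm_num : (2:ℝ) ≤ 7) hcont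
  have hmem : 2 * π ∈ Icc (hfun 2) (hfun 7) := ⟨h2lt.le, h7gt.le⟩
  obtain ⟨c, hc, hceq⟩ := hiv hmem
  have hc1 : 1 < c := by linarith [hc.1]
  refine ⟨c, ⟨hc1, ?_⟩, ?_⟩
  · rw [g_eq hc1, hceq]; ring
  · rintro y ⟨hy1, hy0⟩
    rw [g_eq hy1] at hy0
    have hyeq : hfun y = 2 * π := by linarith
    have hceq' : hfun c = 2 * π := hceq
    by_contra hne
    rcases lt_or_gt_of_ne hne with h | h
    · have := hfun_strictMonoOn (mem_Ioi.mpr hy1) (mem_Ioi.mpr hc1) h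
      rw [hyeq, hceq'] at this; exact lt_irrefl _ this
    · have := hfun_strictMonoOn (mem_Ioi.mpr hc1) (mem_Ioi.mpr hy1) h
      rw [hyeq, hceq'] at this; exact lt_irrefl _ this
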